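/- Let A : H → H' be a bounded operator between reproducing kernel Hilbert spaces of holomorphic V- resp. V'-valued maps on D which intertwines all multiplications by holomorphic multipliers (f^∘ A = A f^∘). Then A acts pointwise: (AΦ)_z = A_z Φ_z where A_z ∈ Hom(V,V') is defined by A_zφ = (Aφ)_z on constant functions φ ∈ V, provided all constant functions belong to H. -/

import Mathlib

/-- Let `A : H → H'` be a bounded operator between reproducing kernel
Hilbert spaces of holomorphic `V`- resp. `V'`-valued maps on `D` (realized here via
evaluation maps `ev z`, `ev' z`), containing the constants (`ι : V → H`,
`ev z (ι φ) = φ`), such that `A` intertwines all multiplications by the holomorphic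
multipliers `z ↦ (φ_i|Φ_z)` (so that `Φ = Σ_i (φ_i|Φ)^∘ φ_i`).  Then `A` acts
pointwise: `(AΦ)_z = A_z Φ_z`, where `A_z φ = (Aφ)_z` on constants `φ ∈ V`. -/
theorem stmt13 {D H H' V V' : Type*}
    [NormedAddCommGroup H] [InnerProductSpace ℂ H]
    [NormedAddCommGroup H'] [InnerProductSpace ℂ H']
    [NormedAddCommGroup V] [InnerProductSpace ℂ V] [FiniteDimensional ℂ V]
    [NormedAddCommGroup V'] [InnerProductSpace ℂ V']
    {m : ℕ} (bV : OrthonormalBasis (Fin m) ℂ V)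
    (ev : D → (H →L[ℂ] V)) (ev' : D → (H' →L[ℂ] V'))
    (ι : V →L[ℂ] H) (hι : ∀ (z : D) (φ : V), ev z (ι φ) = φ)
    (M : H → Fin m → (H →L[ℂ] H)) (M' : H → Fin m → (H' →L[ℂ] H'))
    (hM : ∀ (Φ : H) (i : Fin m) (Ψ : H) (z : D),
      ev z (M Φ i Ψ) = (inner ℂ (bV i) (ev z Φ) : ℂ) • ev z Ψ)
    (hM' : ∀ (Φ : H) (i : Fin m) (Ψ' : H') (z : D),
      ev' z (M' Φ i Ψ') = (inner ℂ (bV i) (ev z Φ) : ℂ) • ev' z Ψ')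
    (hrec : ∀ Φ : H, Φ = ∑ i, M Φ i (ι (bV i)))
    (A : H →L[ℂ] H')
    (hA : ∀ (Φ : H) (i : Fin m), A.comp (M Φ i) = (M' Φ i).comp A) :
    ∀ (Φ : H) (z : D), ev' z (A Φ) = ev' z (A (ι (ev z Φ))) := by
  intro Φ z
  have h1 : ev' z (A Φ) = ∑ i, (inner ℂ (bV i) (ev z Φ) : ℂ) • ev' z (A (ι (bV i))) := by
    conv_lhs => rw [hrec Φ]
    rw [map_sum, map_sum]
    refine Finset.sum_congr rfl fun i _ => ?_
    have := congrArg (fun T : H →L[ℂ] H' => T (ι (bV i))) (hA Φ i)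
    simp only [ContinuousLinearMap.comp_apply] at this
    rw [this, hM']
  have h2 : ι (ev z Φ) = ∑ i, (inner ℂ (bV i) (ev z Φ) : ℂ) • ι (bV i) := by
    conv_lhs => rw [← bV.sum_repr' (ev z Φ)]
    rw [map_sum]
    simp
  rw [h1, h2, map_sum, map_sum]
  refine Finset.sum_congr rfl fun i _ => ?_
  simp
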